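/- Let δ₁ > 0, δ₂ > 0, β ∈ ℝ, s ≥ 0 and r ≥ 0. With h(s,τ) = s √δ₁ / √( δ₁ e^{-4τδ₁} + (1 - e^{-4τδ₁}) δ₂ β² s² ), the damping integral satisfies F(s,r) := ∫_0^r ( -δ₁ + δ₂ β² [h(s,τ)]² ) dτ = -δ₁ r + (1/4) ln[ 1 + δ₂ β² s² (e^{4δ₁ r} - 1)/δ₁ ]. -/

import Mathlib

open intervalIntegral

/-- For g(ρ) = -δ₁ + δ₂β²ρ² with density flow
h(s,τ) = s√δ₁/√(δ₁ e^{-4τδ₁} + (1 - e^{-4τδ₁}) δ₂β²s²), the amplitude integral is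
F(s,r) = ∫_0^r g(h(s,τ)) dτ = -δ₁ r + (1/4) ln[1 + δ₂β²s²(e^{4δ₁r} - 1)/δ₁]. -/
theorem stmt11 (δ₁ δ₂ β s r : ℝ) (hδ₁ : 0 < δ₁) (hδ₂ : 0 < δ₂) (hs : 0 ≤ s)
    (hr : 0 ≤ r)
    (h : ℝ → ℝ)
    (hdef : ∀ τ : ℝ, h τ = s * Real.sqrt δ₁ /
      Real.sqrt (δ₁ * Real.exp (-4 * τ * δ₁) +
        (1 - Real.exp (-4 * τ * δ₁)) * δ₂ * β ^ 2 * s ^ 2)) :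
    (∫ τ in (0:ℝ)..r, (-δ₁ + δ₂ * β ^ 2 * h τ ^ 2)) =
      -δ₁ * r + (1 / 4) *
        Real.log (1 + δ₂ * β ^ 2 * s ^ 2 * (Real.exp (4 * δ₁ * r) - 1) / δ₁) := by
  set c : ℝ := δ₂ * β ^ 2 with hc
  have hc0 : 0 ≤ c := by positivity
  set D : ℝ → ℝ := fun τ => δ₁ * Real.exp (-4 * τ * δ₁) +
      (1 - Real.exp (-4 * τ * δ₁)) * c * s ^ 2 with hD
  have hDpos : ∀ τ ∈ Set.Icc (0:ℝ) r, 0 < D τ := by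
    intro τ hτ
    have he1 : Real.exp (-4 * τ * δ₁) ≤ 1 := by
      apply Real.exp_le_one_iff.mpr
      nlinarith [hτ.1, hδ₁.le]
    have h2 : 0 ≤ (1 - Real.exp (-4 * τ * δ₁)) * c * s ^ 2 :=
      mul_nonneg (mul_nonneg (by linarith) hc0) (sq_nonneg s)
    have h3 : 0 < δ₁ * Real.exp (-4 * τ * δ₁) :=
      mul_pos hδ₁ (Real.exp_pos _)
    simp only [hD]; linarith
  set A : ℝ → ℝ := fun τ => 1 + c * s ^ 2 * (Real.exp (4 * δ₁ * τ) - 1) / δ₁ with hA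
  have hApos : ∀ τ ∈ Set.Icc (0:ℝ) r, 0 < A τ := by
    intro τ hτ
    have : (1:ℝ) ≤ Real.exp (4 * δ₁ * τ) := by
      apply Real.one_le_exp_iff.mpr
      nlinarith [hτ.1, hδ₁.le]
    have : 0 ≤ c * s ^ 2 * (Real.exp (4 * δ₁ * τ) - 1) / δ₁ :=
      div_nonneg (mul_nonneg (mul_nonneg hc0 (sq_nonneg s)) (by linarith)) hδ₁.le
    simp only [hA]; linarith
  -- rewrite integrand
  have huIcc : Set.uIcc (0:ℝ) r = Set.Icc 0 r := Set.uIcc_of_le hr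
  have hcongr : ∀ τ ∈ Set.Icc (0:ℝ) r,
      -δ₁ + δ₂ * β ^ 2 * h τ ^ 2 = -δ₁ + c * s ^ 2 * δ₁ / D τ := by
    intro τ hτ
    have hD' := hDpos τ hτ
    rw [hdef τ]
    have : Real.sqrt (δ₁ * Real.exp (-4 * τ * δ₁) +
        (1 - Real.exp (-4 * τ * δ₁)) * δ₂ * β ^ 2 * s ^ 2) ^ 2 = D τ := by
      rw [Real.sq_sqrt]
      · simp only [hD, hc]; ring
      · have : δ₁ * Real.exp (-4 * τ * δ₁) +
            (1 - Real.exp (-4 * τ * δ₁)) * δ₂ * β ^ 2 * s ^ 2 = D τ := by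
          simp only [hD, hc]; ring
        rw [this]; exact hD'.le
    rw [div_pow, mul_pow, Real.sq_sqrt hδ₁.le, this]
    rw [← hc]; ring
  rw [intervalIntegral.integral_congr (g := fun τ => -δ₁ + c * s ^ 2 * δ₁ / D τ)
    (by rw [huIcc]; exact hcongr)]
  -- FTC with antiderivative F
  have FTC : (∫ τ in (0:ℝ)..r, (-δ₁ + c * s ^ 2 * δ₁ / D τ)) =
      (-δ₁ * r + (1/4) * Real.log (A r)) - (-δ₁ * 0 + (1/4) * Real.log (A 0)) := by
    apply intervalIntegral.integral_eq_sub_of_hasDerivAt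
    · intro τ hτ
      rw [huIcc] at hτ
      have hA' := hApos τ hτ
      have hD' := hDpos τ hτ
      have hAderiv : HasDerivAt A (c * s ^ 2 * (Real.exp (4 * δ₁ * τ) * (4 * δ₁)) / δ₁) τ := by
        have : HasDerivAt (fun τ : ℝ => Real.exp (4 * δ₁ * τ)) (Real.exp (4 * δ₁ * τ) * (4 * δ₁)) τ := by
          exact ((Real.hasDerivAt_exp (4 * δ₁ * τ)).comp τ
            ((hasDerivAt_id τ).const_mul (4 * δ₁))).congr_deriv (by ring)
        exact (this.sub_const 1).const_mul (c * s ^ 2) |>.div_const δ₁ |>.const_add 1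
      have : HasDerivAt (fun τ => -δ₁ * τ + (1/4) * Real.log (A τ))
          (-δ₁ + (1/4) * (c * s ^ 2 * (Real.exp (4 * δ₁ * τ) * (4 * δ₁)) / δ₁ / A τ)) τ := by
        have hlog := (hAderiv.log (ne_of_gt hA')).const_mul (1/4 : ℝ)
        have hlin : HasDerivAt (fun τ : ℝ => -δ₁ * τ) (-δ₁) τ := by
          simpa using (hasDerivAt_id τ).const_mul (-δ₁)
        exact hlin.add hlog
      refine this.congr_deriv ?_
      -- show -δ₁ + c s² δ₁ / D τ = -δ₁ + (1/4)(4 c s² e / (δ₁ A))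
      have hexp : Real.exp (-4 * τ * δ₁) * Real.exp (4 * δ₁ * τ) = 1 := by
        rw [← Real.exp_add, show -4 * τ * δ₁ + 4 * δ₁ * τ = 0 by ring, Real.exp_zero]
      have hstep : c * s ^ 2 * δ₁ / D τ = c * s ^ 2 * Real.exp (4 * δ₁ * τ) / A τ := by
        rw [div_eq_div_iff hD'.ne' hA'.ne']
        have hDτ : D τ = δ₁ * Real.exp (-4 * τ * δ₁) +
            (1 - Real.exp (-4 * τ * δ₁)) * c * s ^ 2 := rfl
        have hAτ : A τ = 1 + c * s ^ 2 * (Real.exp (4 * δ₁ * τ) - 1) / δ₁ := rfl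
        rw [hDτ, hAτ]
        field_simp
        rw [show -(δ₁ * 4 * τ) = -4 * τ * δ₁ by ring, show δ₁ * 4 * τ = 4 * δ₁ * τ by ring]
        linear_combination (c * s ^ 2 * (c * s ^ 2 - δ₁)) * hexp
      rw [hstep]
      field_simp
    · apply ContinuousOn.intervalIntegrable
      apply ContinuousOn.add continuousOn_const
      apply ContinuousOn.div continuousOn_const
      · apply Continuous.continuousOn; fun_prop
      · intro τ hτ; rw [huIcc] at hτ; exact (hDpos τ hτ).ne'
  rw [FTC]
  have hA0 : A 0 = 1 := by simp [hA]
  simp [hA0, hA, hc]
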